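/- Let 𝒢(c⁻) be an S-graph on a linearly ordered set c⁻ of t−1 coefficients, and let 𝒢(c) be obtained by binary fusion: take two relabelled copies 𝒢⁺, 𝒢⁻ of 𝒢(c⁻) (where the label s is skipped on edges and the vertex label s resp. s+1 is skipped in 𝒢⁺ resp. 𝒢⁻), and join every vertex v of 𝒢⁺ with i_v = s+1 to its mirror φ(v) in 𝒢⁻ by a new edge labelled s, where c_s is the unique maximal element of c. Then 𝒢(c) has a unique pointed chain (property P₄). -/

import Mathlib

/-- A pointed chain in a labelled graph with vertex labels in `Fin (m+1)` and edge
labels in `Fin m`: vertices `w i` with `i_{w i} = i`, consecutive vertices joined by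
an edge labelled `i`. -/
def IsPointedChain {U : Type*} {m : ℕ} (E : U → U → Prop) (iv : U → Fin (m+1))
    (el : U → U → Fin m) (w : Fin (m+1) → U) : Prop :=
  (∀ i, iv (w i) = i) ∧
  ∀ i : Fin m, E (w i.castSucc) (w i.succ) ∧ el (w i.castSucc) (w i.succ) = i

/-- Binary fusion, edge relation: two copies `𝒢⁺ = inl`, `𝒢⁻ = inr` of the base graph,
joined by an edge between each `v ∈ 𝒢⁺` whose fused vertex label is `s+1` (i.e. base
label `s`) and its mirror `φ(v) ∈ 𝒢⁻`. -/
def fuseE {V : Type*} {n : ℕ} (E : V → V → Prop) (iv : V → Fin (n+1))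
    (s : Fin (n+1)) : (V ⊕ V) → (V ⊕ V) → Prop
  | Sum.inl v, Sum.inl w => E v w
  | Sum.inr v, Sum.inr w => E v w
  | Sum.inl v, Sum.inr w => v = w ∧ iv v = s
  | Sum.inr v, Sum.inl w => v = w ∧ iv w = s

/-- Binary fusion, vertex labels: `𝒢⁺` is relabelled by `ψ^s` (skipping the vertex
label `s`), `𝒢⁻` by `ψ^{s+1}` (skipping `s+1`). -/
def fuseIv {V : Type*} {n : ℕ} (iv : V → Fin (n+1)) (s : Fin (n+1)) :
    (V ⊕ V) → Fin (n+2)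
  | Sum.inl v => (s.castSucc).succAbove (iv v)
  | Sum.inr v => (s.succ).succAbove (iv v)

/-- Binary fusion, edge labels: old edges are relabelled by `ψ_s` (skipping `s`),
the new joining edges are labelled `s`. -/
def fuseEl {V : Type*} {n : ℕ} (el : V → V → Fin n) (s : Fin (n+1)) :
    (V ⊕ V) → (V ⊕ V) → Fin (n+1)
  | Sum.inl v, Sum.inl w => s.succAbove (el v w)
  | Sum.inr v, Sum.inr w => s.succAbove (el v w)
  | _, _ => s

/-- if the base graph `𝒢(c⁻)` (an S-graph; in particular satisfying
P₁, P₂ and having a unique pointed chain) is fused into `𝒢(c)` by binary fusion,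
then `𝒢(c)` has a unique pointed chain (property P₄). -/
lemma succAbove_val' {m : ℕ} (p : Fin (m+1)) (i : Fin m) :
    ((p.succAbove i : Fin (m+1)) : ℕ) = if (i:ℕ) < (p:ℕ) then (i:ℕ) else (i:ℕ)+1 := by
  rcases lt_or_ge (i:ℕ) (p:ℕ) with h|h
  · rw [Fin.succAbove, if_pos (by simpa [Fin.lt_def] using h), if_pos h]; simp
  · rw [Fin.succAbove, if_neg (by simp [Fin.lt_def]; omega), if_neg (by omega)]; simp

theorem stmt_11 {V : Type*} {n : ℕ} (E : V → V → Prop) (iv : V → Fin (n+1))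
    (el : V → V → Fin n) (s : Fin (n+1))
    (hEsymm : ∀ v w, E v w → E w v)
    (helsymm : ∀ v w, el v w = el w v)
    (hP1 : ∀ v w, E v w → iv v ≠ iv w)
    (hP2 : ∀ v w w', E v w → E v w' → w ≠ w' → el v w ≠ el v w')
    (hP4 : ∃! w : Fin (n+1) → V, IsPointedChain E iv el w) :
    ∃! w : Fin (n+2) → (V ⊕ V),
      IsPointedChain (fuseE E iv s) (fuseIv iv s) (fuseEl el s) w := by
  obtain ⟨w₀, hw₀, huniq⟩ := hP4
  have hsn : (s:ℕ) ≤ n := Nat.lt_succ_iff.mp s.isLt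
  -- base chain, nat-indexed versions
  have hlab : ∀ (k : ℕ) (hk : k < n+1), iv (w₀ ⟨k, hk⟩) = ⟨k, hk⟩ := fun k hk => hw₀.1 ⟨k, hk⟩
  have hedge : ∀ (k : ℕ) (hk : k < n),
      E (w₀ ⟨k, by omega⟩) (w₀ ⟨k+1, by omega⟩) ∧
      el (w₀ ⟨k, by omega⟩) (w₀ ⟨k+1, by omega⟩) = ⟨k, hk⟩ := fun k hk => hw₀.2 ⟨k, hk⟩
  set W : Fin (n+2) → V ⊕ V := fun j =>
    if _ : (j:ℕ) ≤ (s:ℕ) then Sum.inr (w₀ ⟨(j:ℕ), by omega⟩)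
    else Sum.inl (w₀ ⟨(j:ℕ) - 1, by omega⟩) with hWdef
  have hWr : ∀ (j : Fin (n+2)) (k : ℕ) (hk : k < n+1), (j:ℕ) = k → k ≤ (s:ℕ) →
      W j = Sum.inr (w₀ ⟨k, hk⟩) := by
    intro j k hk hjk hks
    simp only [hWdef]
    rw [dif_pos (by omega)]
    exact congrArg (fun x => Sum.inr (w₀ x)) (Fin.ext hjk)
  have hWl : ∀ (j : Fin (n+2)) (k : ℕ) (hk : k < n+1), (j:ℕ) = k + 1 → (s:ℕ) < k + 1 →
      W j = Sum.inl (w₀ ⟨k, hk⟩) := by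
    intro j k hk hjk hks
    simp only [hWdef]
    rw [dif_neg (by omega)]
    exact congrArg (fun x => Sum.inl (w₀ x)) (Fin.ext (by simp only [Fin.val_mk]; omega))
  refine ⟨W, ⟨?_, ?_⟩, ?_⟩
  · -- vertex labels of W
    intro j
    by_cases h : (j:ℕ) ≤ (s:ℕ)
    · rw [hWr j (j:ℕ) (by omega) rfl h]
      show (s.succ).succAbove (iv (w₀ ⟨(j:ℕ), _⟩)) = j
      rw [hlab]
      apply Fin.ext
      rw [succAbove_val']
      simp only [Fin.val_mk, Fin.val_succ]
      split <;> omega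
    · rw [hWl j ((j:ℕ)-1) (by omega) (by omega) (by omega)]
      show (s.castSucc).succAbove (iv (w₀ ⟨(j:ℕ)-1, _⟩)) = j
      rw [hlab]
      apply Fin.ext
      rw [succAbove_val']
      simp only [Fin.val_mk, Fin.coe_castSucc]
      split <;> omega
  · -- edges of W
    intro i
    have hi1 : ((i.castSucc : Fin (n+2)) : ℕ) = (i:ℕ) := by simp
    have hi2 : ((i.succ : Fin (n+2)) : ℕ) = (i:ℕ)+1 := by simp
    rcases lt_trichotomy (i:ℕ) (s:ℕ) with h|h|h
    · rw [hWr i.castSucc (i:ℕ) (by omega) hi1 (by omega),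
         hWr i.succ ((i:ℕ)+1) (by omega) hi2 (by omega)]
      have hin : (i:ℕ) < n := by omega
      refine ⟨(hedge (i:ℕ) hin).1, ?_⟩
      show s.succAbove (el (w₀ ⟨(i:ℕ), _⟩) (w₀ ⟨(i:ℕ)+1, _⟩)) = i
      rw [(hedge (i:ℕ) hin).2]
      apply Fin.ext
      rw [succAbove_val']
      simp only [Fin.val_mk]
      split <;> omega
    · rw [hWr i.castSucc (i:ℕ) (by omega) hi1 (by omega),
         hWl i.succ (i:ℕ) (by omega) hi2 (by omega)]
      refine ⟨⟨rfl, ?_⟩, ?_⟩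
      · rw [hlab]
        exact Fin.ext (by simp [h])
      · show s = i
        exact Fin.ext h.symm
    · obtain ⟨k, hk⟩ : ∃ k, (i:ℕ) = k+1 := ⟨(i:ℕ)-1, by omega⟩
      have ha1 : k < n+1 := by omega
      have ha2 : ((i.castSucc : Fin (n+2)) : ℕ) = k+1 := by omega
      have ha3 : (s:ℕ) < k+1 := by omega
      have ha4 : k+1 < n+1 := by omega
      have ha5 : ((i.succ : Fin (n+2)) : ℕ) = (k+1)+1 := by omega
      have ha6 : (s:ℕ) < (k+1)+1 := by omega
      rw [hWl i.castSucc k ha1 ha2 ha3, hWl i.succ (k+1) ha4 ha5 ha6]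
      have hkn : k < n := by omega
      refine ⟨(hedge k hkn).1, ?_⟩
      show s.succAbove (el (w₀ ⟨k, _⟩) (w₀ ⟨k+1, _⟩)) = i
      rw [(hedge k hkn).2]
      apply Fin.ext
      rw [succAbove_val']
      simp only [Fin.val_mk]
      split <;> omega
  · -- uniqueness
    intro W' hW'
    obtain ⟨hV', hE'⟩ := hW'
    have hVk : ∀ (k : ℕ) (hk : k < n+2), fuseIv iv s (W' ⟨k, hk⟩) = ⟨k, hk⟩ :=
      fun k hk => hV' ⟨k, hk⟩
    have hEk : ∀ (k : ℕ) (hk : k < n+1),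
        fuseE E iv s (W' ⟨k, by omega⟩) (W' ⟨k+1, by omega⟩) ∧
        fuseEl el s (W' ⟨k, by omega⟩) (W' ⟨k+1, by omega⟩) = ⟨k, hk⟩ :=
      fun k hk => hE' ⟨k, hk⟩
    -- label computations
    have ivL : ∀ (v : V) (j : Fin (n+2)), fuseIv iv s (Sum.inl v) = j →
        (if ((iv v : Fin (n+1)) : ℕ) < (s:ℕ) then ((iv v : Fin (n+1)) : ℕ)
          else ((iv v : Fin (n+1)) : ℕ)+1) = (j:ℕ) := by
      intro v j hj
      have h3 := congrArg Fin.val hj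
      rw [show fuseIv iv s (Sum.inl v) = (s.castSucc).succAbove (iv v) from rfl,
        succAbove_val'] at h3
      simpa using h3
    have ivR : ∀ (v : V) (j : Fin (n+2)), fuseIv iv s (Sum.inr v) = j →
        (if ((iv v : Fin (n+1)) : ℕ) < (s:ℕ)+1 then ((iv v : Fin (n+1)) : ℕ)
          else ((iv v : Fin (n+1)) : ℕ)+1) = (j:ℕ) := by
      intro v j hj
      have h3 := congrArg Fin.val hj
      rw [show fuseIv iv s (Sum.inr v) = (s.succ).succAbove (iv v) from rfl,
        succAbove_val'] at h3
      simpa using h3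
    have labLL : ∀ (a b : V) (j : Fin (n+1)), fuseEl el s (Sum.inl a) (Sum.inl b) = j →
        (if ((el a b : Fin n) : ℕ) < (s:ℕ) then ((el a b : Fin n) : ℕ)
          else ((el a b : Fin n) : ℕ)+1) = (j:ℕ) := by
      intro a b j hj
      have h3 := congrArg Fin.val hj
      rw [show fuseEl el s (Sum.inl a) (Sum.inl b) = s.succAbove (el a b) from rfl,
        succAbove_val'] at h3
      exact h3
    have labRR : ∀ (a b : V) (j : Fin (n+1)), fuseEl el s (Sum.inr a) (Sum.inr b) = j →
        (if ((el a b : Fin n) : ℕ) < (s:ℕ) then ((el a b : Fin n) : ℕ)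
          else ((el a b : Fin n) : ℕ)+1) = (j:ℕ) := by
      intro a b j hj
      have h3 := congrArg Fin.val hj
      rw [show fuseEl el s (Sum.inr a) (Sum.inr b) = s.succAbove (el a b) from rfl,
        succAbove_val'] at h3
      exact h3
    -- a non-fused chain edge stays on one side
    have hstep : ∀ (k : ℕ) (hk : k < n+1), k ≠ (s:ℕ) →
        ((∃ a, W' ⟨k, by omega⟩ = Sum.inl a) ↔ (∃ b, W' ⟨k+1, by omega⟩ = Sum.inl b)) := by
      intro k hk hks
      have hl := (hEk k hk).2
      constructor
      · rintro ⟨a, ha⟩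
        rcases h2 : W' ⟨k+1, by omega⟩ with b | b
        · exact ⟨b, rfl⟩
        · exfalso
          rw [ha, h2] at hl
          exact hks ((congrArg Fin.val hl).symm)
      · rintro ⟨b, hb⟩
        rcases h1 : W' ⟨k, by omega⟩ with a | a
        · exact ⟨a, rfl⟩
        · exfalso
          rw [h1, hb] at hl
          exact hks ((congrArg Fin.val hl).symm)
    -- the vertex labelled s+1 is in the left copy
    have hbIsL : ∃ v, W' ⟨(s:ℕ)+1, by omega⟩ = Sum.inl v := by
      rcases h : W' ⟨(s:ℕ)+1, by omega⟩ with v | v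
      · exact ⟨v, rfl⟩
      · exfalso
        have h2 := hVk ((s:ℕ)+1) (by omega)
        rw [h] at h2
        have h3 := ivR v _ h2
        simp only [Fin.val_mk] at h3
        split at h3 <;> omega
    -- the vertex labelled s is in the right copy
    have hbIsR : ∃ v, W' ⟨(s:ℕ), by omega⟩ = Sum.inr v := by
      rcases h : W' ⟨(s:ℕ), by omega⟩ with v | v
      · exfalso
        have h2 := hVk (s:ℕ) (by omega)
        rw [h] at h2
        have h3 := ivL v _ h2
        simp only [Fin.val_mk] at h3
        split at h3 <;> omega
      · exact ⟨v, rfl⟩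
    -- propagation: everything below s is in the right copy
    have hR : ∀ (k : ℕ) (hks : k ≤ (s:ℕ)), ∃ v, W' ⟨k, by omega⟩ = Sum.inr v := by
      suffices h : ∀ d (k : ℕ) (_ : k + d = (s:ℕ)), ∃ v, W' ⟨k, by omega⟩ = Sum.inr v by
        intro k hks; exact h ((s:ℕ)-k) k (by omega)
      intro d
      induction d with
      | zero =>
        intro k hk0
        have hk : k = (s:ℕ) := by omega
        subst hk
        exact hbIsR
      | succ d ih =>
        intro k hk0
        have h1 := ih (k+1) (by omega)
        have h2 := hstep k (by omega) (by omega)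
        rcases h : W' ⟨k, by omega⟩ with v | v
        · exfalso
          obtain ⟨b, hb⟩ := h2.mp ⟨v, h⟩
          obtain ⟨v', hv'⟩ := h1
          rw [hv'] at hb
          exact absurd hb (by simp)
        · exact ⟨v, rfl⟩
    -- propagation: everything above s is in the left copy
    have hL : ∀ (k : ℕ) (hk : k < n+2), (s:ℕ) < k → ∃ v, W' ⟨k, hk⟩ = Sum.inl v := by
      suffices h : ∀ d (k : ℕ) (hk : k < n+2) (_ : k = (s:ℕ)+1+d), ∃ v, W' ⟨k, hk⟩ = Sum.inl v by
        intro k hk hsk; exact h (k-((s:ℕ)+1)) k hk (by omega)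
      intro d
      induction d with
      | zero =>
        intro k hk hk0
        have hk' : k = (s:ℕ)+1 := by omega
        subst hk'
        exact hbIsL
      | succ d ih =>
        intro k hk hk0
        have h1 := ih ((s:ℕ)+1+d) (by omega) rfl
        have h2 := hstep ((s:ℕ)+1+d) (by omega) (by omega)
        obtain ⟨b, hb⟩ := h2.mp h1
        subst hk0
        exact ⟨b, hb⟩
    choose vR hvR using hR
    choose vL hvL using hL
    have vRc : ∀ (k k' : ℕ) (hk : k ≤ (s:ℕ)) (hk' : k' ≤ (s:ℕ)), k = k' →
        vR k hk = vR k' hk' := by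
      rintro k k' hk hk' rfl; rfl
    have vLc : ∀ (k k' : ℕ) (hk : k < n+2) (hk' : k' < n+2) (h1 : (s:ℕ) < k)
        (h1' : (s:ℕ) < k'), k = k' → vL k hk h1 = vL k' hk' h1' := by
      rintro k k' hk hk' h1 h1' rfl; rfl
    -- the candidate base chain
    set w' : Fin (n+1) → V := fun j =>
      if h : (j:ℕ) ≤ (s:ℕ) then vR (j:ℕ) h
      else vL ((j:ℕ)+1) (by omega) (by omega) with hw'def
    have hw'r : ∀ (j : Fin (n+1)) (h : (j:ℕ) ≤ (s:ℕ)), w' j = vR (j:ℕ) h := by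
      intro j h
      simp only [hw'def]
      rw [dif_pos h]
    have hw'l : ∀ (j : Fin (n+1)) (h : ¬ (j:ℕ) ≤ (s:ℕ)),
        w' j = vL ((j:ℕ)+1) (by omega) (by omega) := by
      intro j h
      simp only [hw'def]
      rw [dif_neg h]
    -- w' is a pointed chain in the base graph
    have hchain : IsPointedChain E iv el w' := by
      constructor
      · intro j
        by_cases h : (j:ℕ) ≤ (s:ℕ)
        · rw [hw'r j h]
          have h2 := hVk (j:ℕ) (by omega)
          rw [hvR (j:ℕ) h] at h2
          have h3 := ivR _ _ h2
          simp only [Fin.val_mk] at h3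
          apply Fin.ext
          split at h3 <;> omega
        · rw [hw'l j h]
          have h2 := hVk ((j:ℕ)+1) (by omega)
          rw [hvL ((j:ℕ)+1) (by omega) (by omega)] at h2
          have h3 := ivL _ _ h2
          simp only [Fin.val_mk] at h3
          apply Fin.ext
          split at h3 <;> omega
      · intro i
        rcases lt_trichotomy (i:ℕ) (s:ℕ) with h|h|h
        · have e1 : w' i.castSucc = vR (i:ℕ) (by omega) :=
            (hw'r i.castSucc (by simp; omega)).trans
              (vRc _ _ _ _ (by simp))
          have e2 : w' i.succ = vR ((i:ℕ)+1) (by omega) :=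
            (hw'r i.succ (by simp; omega)).trans
              (vRc _ _ _ _ (by simp))
          have h4 := hEk (i:ℕ) (by omega)
          rw [hvR (i:ℕ) (by omega), hvR ((i:ℕ)+1) (by omega)] at h4
          rw [e1, e2]
          refine ⟨h4.1, ?_⟩
          have h3 := labRR _ _ _ h4.2
          simp only [Fin.val_mk] at h3
          apply Fin.ext
          split at h3 <;> omega
        · -- the fused edge: i = s
          have e1 : w' i.castSucc = vR (i:ℕ) (by omega) :=
            (hw'r i.castSucc (by simp; omega)).trans
              (vRc _ _ _ _ (by simp))
          have e2 : w' i.succ = vL ((i:ℕ)+1+1) (by omega) (by omega) :=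
            (hw'l i.succ (by simp; omega)).trans
              (vLc _ _ _ _ _ _ (by simp))
          -- mirror edge at index s gives vR s = vL (s+1)
          have h4 := (hEk (i:ℕ) (by omega)).1
          rw [hvR (i:ℕ) (by omega), hvL ((i:ℕ)+1) (by omega) (by omega)] at h4
          obtain ⟨hmir, -⟩ := h4
          -- edge at index s+1 (inside the left copy)
          have h5 := hEk ((i:ℕ)+1) (by omega)
          rw [hvL ((i:ℕ)+1) (by omega) (by omega),
            hvL ((i:ℕ)+1+1) (by omega) (by omega)] at h5
          rw [e1, e2, hmir]
          refine ⟨h5.1, ?_⟩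
          have h3 := labLL _ _ _ h5.2
          simp only [Fin.val_mk] at h3
          apply Fin.ext
          split at h3 <;> omega
        · have e1 : w' i.castSucc = vL ((i:ℕ)+1) (by omega) (by omega) :=
            (hw'l i.castSucc (by simp; omega)).trans
              (vLc _ _ _ _ _ _ (by simp))
          have e2 : w' i.succ = vL ((i:ℕ)+1+1) (by omega) (by omega) :=
            (hw'l i.succ (by simp; omega)).trans
              (vLc _ _ _ _ _ _ (by simp))
          have h5 := hEk ((i:ℕ)+1) (by omega)
          rw [hvL ((i:ℕ)+1) (by omega) (by omega),
            hvL ((i:ℕ)+1+1) (by omega) (by omega)] at h5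
          rw [e1, e2]
          refine ⟨h5.1, ?_⟩
          have h3 := labLL _ _ _ h5.2
          simp only [Fin.val_mk] at h3
          apply Fin.ext
          split at h3 <;> omega
    have hw'w₀ : w' = w₀ := huniq w' hchain
    -- mirror fact, needed for the index s+1
    have hmir : vR (s:ℕ) (le_refl _) = vL ((s:ℕ)+1) (by omega) (by omega) := by
      have h4 := (hEk (s:ℕ) (by omega)).1
      rw [hvR (s:ℕ) (le_refl _), hvL ((s:ℕ)+1) (by omega) (by omega)] at h4
      exact h4.1
    -- conclude W' = W pointwise
    funext j
    have hje : (⟨(j:ℕ), j.isLt⟩ : Fin (n+2)) = j := Fin.ext rfl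
    by_cases h : (j:ℕ) ≤ (s:ℕ)
    · rw [hWr j (j:ℕ) (by omega) rfl h]
      conv_lhs => rw [← hje]
      rw [hvR (j:ℕ) h]
      congr 1
      have hco := congrFun hw'w₀ ⟨(j:ℕ), by omega⟩
      rw [hw'r ⟨(j:ℕ), by omega⟩ h] at hco
      exact hco
    · rw [hWl j ((j:ℕ)-1) (by omega) (by omega) (by omega)]
      conv_lhs => rw [← hje]
      rw [hvL (j:ℕ) (by omega) (by omega)]
      congr 1
      by_cases h2 : (j:ℕ) = (s:ℕ)+1
      · -- use the mirror identification
        rw [vLc (j:ℕ) ((s:ℕ)+1) (by omega) (by omega) (by omega) (by omega) h2, ← hmir]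
        have hco := congrFun hw'w₀ ⟨(s:ℕ), by omega⟩
        rw [hw'r ⟨(s:ℕ), by omega⟩ (by simp)] at hco
        rw [vRc _ _ _ _ rfl] at hco
        rw [hco]
        congr 1
        exact Fin.ext (by simp; omega)
        exact le_refl _
      · rw [vLc (j:ℕ) (((j:ℕ)-1)+1) (by omega) (by omega) (by omega) (by omega) (by omega)]
        have hco := congrFun hw'w₀ ⟨(j:ℕ)-1, by omega⟩
        rw [hw'l ⟨(j:ℕ)-1, by omega⟩ (by simp; omega)] at hco
        exact hco
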